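/- Let 𝒳 be a linearly ordered set, let m ≥ 1, ε ∈ (0,1], α ∈ (0,1], β ∈ (0,1) with L := ln(m/β) ≥ 1, set α* = αε/(24L), and let n be an integer with n ≥ 12L/(αε). Let X be a finite multiset of size n over 𝒳, let 𝒳₀ ⊆ 𝒳 be a finite set with |𝒳₀| = m, let t = ⌈qn⌉ for some q ∈ [0,1], and let r̂_min, r̂_max : 𝒳₀ → ℝ satisfy, for all x ∈ 𝒳₀: r̂_min(x) ≤ r̂_max(x), |r̂_min(x) − r_min(X, x)| ≤ 2α*n and |r̂_max(x) − r_max(X, x)| ≤ 2α*n. Assume there exists x* ∈ 𝒳₀ with d(t, [r̂_min(x*), r̂_max(x*)]) ≤ 2α*n. If x̂ is sampled from the Gibbs distribution on 𝒳₀ with score x ↦ ε·(−d(t, [r̂_min(x), r̂_max(x)]))/(2·(4α*n + 2)), then with probability at least 1 − β the interval [r_min(X, x̂), r_max(X, x̂)] intersects [t − αn, t + αn], i.e., x̂ is an α-approximate q-quantile of X. -/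
import Mathlib


open Finset
open scoped Classical

/-- `rmin X x` is the number of elements of the multiset `X` strictly less than `x`. -/
def rmin {𝒳 : Type*} [LinearOrder 𝒳] (X : Multiset 𝒳) (x : 𝒳) : ℕ :=
  (X.filter (fun y => y < x)).card

/-- `rmax X x` is the number of elements of the multiset `X` at most `x`. -/
def rmax {𝒳 : Type*} [LinearOrder 𝒳] (X : Multiset 𝒳) (x : 𝒳) : ℕ :=
  (X.filter (fun y => y ≤ x)).card

set_option maxHeartbeats 1000000 in
theorem stmt14 {𝒳 : Type*} [LinearOrder 𝒳]
    (m : ℕ) (hm : 1 ≤ m)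
    (ε α β : ℝ) (hε0 : 0 < ε) (hε1 : ε ≤ 1) (hα0 : 0 < α) (hα1 : α ≤ 1)
    (hβ0 : 0 < β) (hβ1 : β < 1)
    (L : ℝ) (hL : L = Real.log (m / β)) (hL1 : 1 ≤ L)
    (αstar : ℝ) (hαstar : αstar = α * ε / (24 * L))
    (n : ℕ) (hn : 12 * L / (α * ε) ≤ (n : ℝ))
    (X : Multiset 𝒳) (hX : X.card = n)
    (X₀ : Finset 𝒳) (hX₀ : X₀.card = m)
    (q : ℝ) (hq0 : 0 ≤ q) (hq1 : q ≤ 1)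
    (t : ℝ) (ht : t = ⌈q * (n : ℝ)⌉)
    (rhmin rhmax : 𝒳 → ℝ)
    (hle : ∀ x ∈ X₀, rhmin x ≤ rhmax x)
    (hmin : ∀ x ∈ X₀, |rhmin x - (rmin X x : ℝ)| ≤ 2 * αstar * n)
    (hmax : ∀ x ∈ X₀, |rhmax x - (rmax X x : ℝ)| ≤ 2 * αstar * n)
    (hstar : ∃ xstar ∈ X₀,
      Metric.infDist t (Set.Icc (rhmin xstar) (rhmax xstar)) ≤ 2 * αstar * n) :
    ∑ x ∈ X₀.filter (fun x =>
        ¬ (Set.Icc (rmin X x : ℝ) (rmax X x : ℝ) ∩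
            Set.Icc (t - α * n) (t + α * n)).Nonempty),
      (Real.exp (ε * (-(Metric.infDist t (Set.Icc (rhmin x) (rhmax x)))) /
          (2 * (4 * αstar * n + 2))) /
        ∑ x' ∈ X₀, Real.exp (ε * (-(Metric.infDist t (Set.Icc (rhmin x') (rhmax x')))) /
          (2 * (4 * αstar * n + 2))))
      ≤ β := by
  obtain ⟨xs, hxs, hxsd⟩ := hstar
  have hLpos : (0:ℝ) < L := lt_of_lt_of_le one_pos hL1
  have hαε : (0:ℝ) < α * ε := mul_pos hα0 hε0
  have hnR : (0:ℝ) < (n:ℝ) := lt_of_lt_of_le (by positivity) hn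
  have h12 : 12 * L ≤ α * ε * n := by
    rw [div_le_iff₀ hαε] at hn; nlinarith
  have hαs : 0 < αstar := by rw [hαstar]; positivity
  have hDpos : (0:ℝ) < 2 * (4 * αstar * n + 2) := by positivity
  set D := 2 * (4 * αstar * (n:ℝ) + 2) with hDdef
  set S := ∑ x' ∈ X₀, Real.exp (ε * (-(Metric.infDist t (Set.Icc (rhmin x') (rhmax x')))) / D)
    with hSdef
  have hSlow : Real.exp (ε * (-(Metric.infDist t (Set.Icc (rhmin xs) (rhmax xs)))) / D) ≤ S :=
    Finset.single_le_sum
      (f := fun x' => Real.exp (ε * (-(Metric.infDist t (Set.Icc (rhmin x') (rhmax x')))) / D))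
      (fun x _ => (Real.exp_pos _).le) hxs
  have hSpos : 0 < S := lt_of_lt_of_le (Real.exp_pos _) hSlow
  set E : ℝ := ε * (α * n - 4 * αstar * n) / D with hEdef
  set bad := X₀.filter (fun x =>
      ¬ (Set.Icc (rmin X x : ℝ) (rmax X x : ℝ) ∩
          Set.Icc (t - α * n) (t + α * n)).Nonempty) with hbaddef
  have hm0 : (0:ℝ) < m := by exact_mod_cast Nat.lt_of_lt_of_le Nat.zero_lt_one hm
  -- key pointwise bound
  have key : ∀ x ∈ bad,
      Real.exp (ε * (-(Metric.infDist t (Set.Icc (rhmin x) (rhmax x)))) / D) / S ≤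
        Real.exp (-E) := by
    intro x hxbad
    rw [hbaddef, Finset.mem_filter] at hxbad
    obtain ⟨hxX₀, hxint⟩ := hxbad
    set a := (rmin X x : ℝ) with hadef
    set b := (rmax X x : ℝ) with hbdef
    have hab : a ≤ b := by
      rw [hadef, hbdef]
      exact_mod_cast Multiset.card_le_card
        (Multiset.monotone_filter_right X (fun y (h : y < x) => le_of_lt h))
    have hcases : b < t - α * n ∨ t + α * n < a := by
      by_contra h
      push_neg at h
      obtain ⟨h1, h2⟩ := h
      exact hxint ⟨max a (t - α * n),
        ⟨le_max_left _ _, max_le hab h1⟩,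
        ⟨le_max_right _ _, max_le h2 (by nlinarith)⟩⟩
    have hfar : α * n - 2 * αstar * n ≤
        Metric.infDist t (Set.Icc (rhmin x) (rhmax x)) := by
      by_contra h'
      push_neg at h'
      obtain ⟨y, hy, hdy⟩ :=
        (Metric.infDist_lt_iff (Set.nonempty_Icc.mpr (hle x hxX₀))).mp h'
      obtain ⟨hy1, hy2⟩ := hy
      rw [Real.dist_eq] at hdy
      rcases hcases with hc | hc
      · have h3 := abs_le.mp (hmax x hxX₀)
        have h4 : t - y ≤ |t - y| := le_abs_self _
        nlinarith [hdy, hy2, h3.1, h3.2, hc]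
      · have h3 := abs_le.mp (hmin x hxX₀)
        have h4 : y - t ≤ |t - y| := by rw [abs_sub_comm]; exact le_abs_self _
        nlinarith [hdy, hy1, h3.1, h3.2, hc]
    calc Real.exp (ε * (-(Metric.infDist t (Set.Icc (rhmin x) (rhmax x)))) / D) / S
        ≤ Real.exp (ε * (-(Metric.infDist t (Set.Icc (rhmin x) (rhmax x)))) / D) /
            Real.exp (ε * (-(Metric.infDist t (Set.Icc (rhmin xs) (rhmax xs)))) / D) := by
          gcongr
      _ = Real.exp (ε * (-(Metric.infDist t (Set.Icc (rhmin x) (rhmax x)))) / D -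
            ε * (-(Metric.infDist t (Set.Icc (rhmin xs) (rhmax xs)))) / D) :=
          (Real.exp_sub _ _).symm
      _ ≤ Real.exp (-E) := by
          apply Real.exp_le_exp.mpr
          rw [hEdef, div_sub_div_same, ← neg_div]
          apply (div_le_div_iff_of_pos_right hDpos).mpr
          nlinarith [hfar, hxsd, hε0.le,
            mul_le_mul_of_nonneg_left
              (by linarith :
                (2 * αstar * n : ℝ) - (α * n - 2 * αstar * n) ≥
                  Metric.infDist t (Set.Icc (rhmin xs) (rhmax xs)) -
                  Metric.infDist t (Set.Icc (rhmin x) (rhmax x))) hε0.le]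
    -- end key
  have hEL : L ≤ E := by
    rw [hEdef, le_div_iff₀ hDpos, hDdef, hαstar]
    have hLne : L ≠ 0 := ne_of_gt hLpos
    have e1 : L * (2 * (4 * (α * ε / (24 * L)) * (n:ℝ) + 2)) = α * ε * n / 3 + 4 * L := by
      field_simp; ring
    have e2 : ε * (α * (n:ℝ) - 4 * (α * ε / (24 * L)) * n) =
        ε * (α * n) - ε * (α * ε * n) / (6 * L) := by
      field_simp; ring
    have e3 : ε * (α * ε * (n:ℝ)) / (6 * L) ≤ α * ε * n / 6 := by
      apply div_le_div₀ (by positivity) (by nlinarith) (by norm_num) (by linarith)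
    rw [e1, e2]
    nlinarith [e3, h12]
  have hexp : Real.exp (-E) ≤ β / m := by
    have heq : Real.exp (-L) = β / m := by
      rw [hL, ← Real.log_inv, Real.exp_log (by positivity), inv_div]
    calc Real.exp (-E) ≤ Real.exp (-L) := Real.exp_le_exp.mpr (by linarith)
      _ = β / m := heq
  have hbc : (bad.card : ℝ) ≤ m := by
    exact_mod_cast (Finset.card_filter_le _ _).trans_eq hX₀
  calc ∑ x ∈ bad, Real.exp (ε * (-(Metric.infDist t (Set.Icc (rhmin x) (rhmax x)))) / D) / S
      ≤ ∑ _x ∈ bad, Real.exp (-E) := Finset.sum_le_sum key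
    _ = (bad.card : ℝ) * Real.exp (-E) := by rw [Finset.sum_const, nsmul_eq_mul]
    _ ≤ (m : ℝ) * Real.exp (-E) :=
        mul_le_mul_of_nonneg_right hbc (Real.exp_pos _).le
    _ ≤ (m : ℝ) * (β / m) :=
        mul_le_mul_of_nonneg_left hexp (le_of_lt hm0)
    _ = β := by field_simp
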